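/- The affine semigroup Q(B,P,B) determined by the classical Pieri rule is a free commutative monoid on 2m−1 generators; equivalently, R_3(B,P,B) is a polynomial ring in 2m−1 variables. The generators are the patterns [i,i] for 1 ≤ i ≤ m−1 and [i+1,i] for 0 ≤ i ≤ m−1, where [i,i] is the interlacing pattern with i ones in both rows followed by zeros, and [i+1,i] has i+1 ones on the top row and i ones on the bottom row. Every interlacing pattern b with top row (a_1 ≥ … ≥ a_m) and bottom row (b_1 ≥ … ≥ b_{m-1}) decomposes uniquely as a nonnegative integer combination of these generators. -/
import Mathlib


/-- The row with `k` ones followed by zeros. -/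
def onesRow (d k : ℕ) : Fin d → ℕ := fun j => if (j : ℕ) < k then 1 else 0

/-- The pattern `[i,i]` (here `i = e.val + 1` ranges over `1 ≤ i ≤ m-1`, `m = n+1`):
`i` ones on the top row and `i` ones on the bottom row, followed by zeros. -/
def genEq (n : ℕ) (e : Fin n) : (Fin (n + 1) → ℕ) × (Fin n → ℕ) :=
  (onesRow (n + 1) (e + 1), onesRow n (e + 1))

/-- The pattern `[i+1,i]` (`0 ≤ i ≤ m-1`, `m = n+1`): `i+1` ones on the top row and `i`
ones on the bottom row, followed by zeros. -/
def genStep (n : ℕ) (e : Fin (n + 1)) : (Fin (n + 1) → ℕ) × (Fin n → ℕ) :=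
  (onesRow (n + 1) (e + 1), onesRow n e)

/-- The `2m-1` generators of `Q(B,P,B)`, `m = n+1`. -/
def pieriGen (n : ℕ) : Fin n ⊕ Fin (n + 1) → (Fin (n + 1) → ℕ) × (Fin n → ℕ) :=
  Sum.elim (genEq n) (genStep n)

/-- The set of interlacing patterns: pairs `(a, b) ∈ ℕ^m × ℕ^{m-1}` with
`a_1 ≥ b_1 ≥ a_2 ≥ … ≥ b_{m-1} ≥ a_m`. -/
def InterlacingPatterns (n : ℕ) : Set ((Fin (n + 1) → ℕ) × (Fin n → ℕ)) :=
  {p | ∀ i : Fin n, p.2 i ≤ p.1 i.castSucc ∧ p.1 i.succ ≤ p.2 i}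

namespace QBPBaux

/-- The canonical coefficients of a pattern. -/
def coef (n : ℕ) (p : (Fin (n + 1) → ℕ) × (Fin n → ℕ)) : Fin n ⊕ Fin (n + 1) → ℕ :=
  Sum.elim (fun e => p.2 e - p.1 e.succ)
    (fun e => if h : (e : ℕ) < n then p.1 e - p.2 ⟨e, h⟩ else p.1 e)

lemma S_fst (n : ℕ) (c : Fin n ⊕ Fin (n + 1) → ℕ) (j : Fin (n + 1)) :
    (∑ g, c g • pieriGen n g).1 j
      = (∑ e : Fin n, if (j : ℕ) ≤ (e : ℕ) then c (.inl e) else 0)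
      + ∑ e : Fin (n + 1), if (j : ℕ) ≤ (e : ℕ) then c (.inr e) else 0 := by
  simp only [Prod.fst_sum, Prod.fst_add, Pi.add_apply, Finset.sum_apply, Prod.smul_fst,
    Pi.smul_apply, Fintype.sum_sum_type, pieriGen, Sum.elim_inl, Sum.elim_inr, genEq,
    genStep, onesRow, smul_eq_mul, mul_ite, mul_one, mul_zero, Nat.lt_succ_iff]

lemma S_snd (n : ℕ) (c : Fin n ⊕ Fin (n + 1) → ℕ) (j : Fin n) :
    (∑ g, c g • pieriGen n g).2 j
      = (∑ e : Fin n, if (j : ℕ) ≤ (e : ℕ) then c (.inl e) else 0)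
      + ∑ e : Fin (n + 1), if (j : ℕ) < (e : ℕ) then c (.inr e) else 0 := by
  simp only [Prod.snd_sum, Prod.snd_add, Pi.add_apply, Finset.sum_apply, Prod.smul_snd,
    Pi.smul_apply, Fintype.sum_sum_type, pieriGen, Sum.elim_inl, Sum.elim_inr, genEq,
    genStep, onesRow, smul_eq_mul, mul_ite, mul_one, mul_zero, Nat.lt_succ_iff]

lemma split_le {N : ℕ} (j : ℕ) (hj : j < N) (f : Fin N → ℕ) :
    (∑ e : Fin N, if j ≤ (e : ℕ) then f e else 0)
      = (∑ e : Fin N, if j < (e : ℕ) then f e else 0) + f ⟨j, hj⟩ := by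
  have h : ∀ e : Fin N, (if j ≤ (e : ℕ) then f e else 0)
      = (if j < (e : ℕ) then f e else 0) + (if e = ⟨j, hj⟩ then f e else 0) := by
    intro e
    by_cases h1 : e = ⟨j, hj⟩
    · subst h1; simp
    · have : (e : ℕ) ≠ j := fun h2 => h1 (Fin.ext h2)
      split_ifs <;> omega
  simp_rw [h, Finset.sum_add_distrib, Finset.sum_ite_eq' Finset.univ (⟨j, hj⟩ : Fin N) f]
  simp

lemma S_step (n : ℕ) (c : Fin n ⊕ Fin (n + 1) → ℕ) (j : Fin n) :
    (∑ g, c g • pieriGen n g).1 j.castSucc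
      = (∑ g, c g • pieriGen n g).2 j + c (.inr j.castSucc) := by
  rw [S_fst, S_snd]
  have hj : (j : ℕ) < n + 1 := j.isLt.trans (Nat.lt_succ_self n)
  rw [show ((j.castSucc : Fin (n + 1)) : ℕ) = (j : ℕ) from rfl,
    split_le (j : ℕ) hj (fun e => c (.inr e))]
  have : (⟨(j : ℕ), hj⟩ : Fin (n + 1)) = j.castSucc := rfl
  rw [this]; ring

lemma S_eqrec (n : ℕ) (c : Fin n ⊕ Fin (n + 1) → ℕ) (j : Fin n) :
    (∑ g, c g • pieriGen n g).2 j
      = (∑ g, c g • pieriGen n g).1 j.succ + c (.inl j) := by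
  rw [S_fst, S_snd]
  rw [split_le (j : ℕ) j.isLt (fun e => c (.inl e))]
  have h1 : (∑ e : Fin n, if (j : ℕ) < (e : ℕ) then c (.inl e) else 0)
      = ∑ e : Fin n, if ((j.succ : Fin (n + 1)) : ℕ) ≤ (e : ℕ) then c (.inl e) else 0 := by
    apply Finset.sum_congr rfl; intro e _
    have : ((j.succ : Fin (n + 1)) : ℕ) = (j : ℕ) + 1 := rfl
    rw [this]; congr 1
  have h2 : (∑ e : Fin (n + 1), if (j : ℕ) < (e : ℕ) then c (.inr e) else 0)
      = ∑ e : Fin (n + 1), if ((j.succ : Fin (n + 1)) : ℕ) ≤ (e : ℕ) then c (.inr e) else 0 := by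
    apply Finset.sum_congr rfl; intro e _
    have : ((j.succ : Fin (n + 1)) : ℕ) = (j : ℕ) + 1 := rfl
    rw [this]; congr 1
  rw [h1, h2]
  have hfin : (⟨(j : ℕ), j.isLt⟩ : Fin n) = j := rfl
  rw [hfin]; ring

lemma S_last (n : ℕ) (c : Fin n ⊕ Fin (n + 1) → ℕ) :
    (∑ g, c g • pieriGen n g).1 (Fin.last n) = c (.inr (Fin.last n)) := by
  rw [S_fst]
  have h1 : (∑ e : Fin n, if ((Fin.last n : Fin (n + 1)) : ℕ) ≤ (e : ℕ)
      then c (.inl e) else 0) = 0 := by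
    apply Finset.sum_eq_zero; intro e _
    have := e.isLt
    simp only [Fin.val_last]; rw [if_neg]; omega
  have h2 : (∑ e : Fin (n + 1), if ((Fin.last n : Fin (n + 1)) : ℕ) ≤ (e : ℕ)
      then c (.inr e) else 0) = c (.inr (Fin.last n)) := by
    have h : ∀ e : Fin (n + 1), (if ((Fin.last n : Fin (n + 1)) : ℕ) ≤ (e : ℕ)
        then c (.inr e) else 0) = if e = Fin.last n then c (.inr e) else 0 := by
      intro e
      have hlt := e.isLt
      by_cases he : e = Fin.last n
      · subst he; simp
      · have hne : (e : ℕ) ≠ n := fun h => he (Fin.ext h)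
        simp only [Fin.val_last]
        rw [if_neg (by omega), if_neg he]
    simp_rw [h]
    rw [Finset.sum_ite_eq' Finset.univ (Fin.last n) (fun e => c (.inr e))]
    simp
  rw [h1, h2, zero_add]

end QBPBaux

/-- The affine semigroup `Q(B,P,B)` of interlacing patterns determined
by the classical Pieri rule is a free commutative monoid on the `2m-1` generators
`[i,i]` (`1 ≤ i ≤ m-1`) and `[i+1,i]` (`0 ≤ i ≤ m-1`), `m = n+1`: each generator is an
interlacing pattern, and every interlacing pattern decomposes uniquely as a nonnegative
integer combination of these generators. -/
theorem QBPB_free (n : ℕ) :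
    (∀ g, pieriGen n g ∈ InterlacingPatterns n) ∧
    ∀ p ∈ InterlacingPatterns n,
      ∃! c : Fin n ⊕ Fin (n + 1) → ℕ, p = ∑ g, c g • pieriGen n g := by
  constructor
  · rintro (e | e) i <;>
      simp only [pieriGen, Sum.elim_inl, Sum.elim_inr, genEq, genStep, onesRow,
        Fin.coe_castSucc, Fin.val_succ] <;>
      constructor <;> split_ifs <;> omega
  · intro p hp
    set c := QBPBaux.coef n p with hc
    have hca : ∀ j : Fin n, c (.inl j) = p.2 j - p.1 j.succ := fun j => rfl
    have hcb : ∀ j : Fin n, c (.inr j.castSucc) = p.1 j.castSucc - p.2 j := by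
      intro j
      simp only [hc, QBPBaux.coef, Sum.elim_inr]
      rw [dif_pos (show ((j.castSucc : Fin (n + 1)) : ℕ) < n from j.isLt)]
      rfl
    have hcl : c (.inr (Fin.last n)) = p.1 (Fin.last n) := by
      simp only [hc, QBPBaux.coef, Sum.elim_inr]
      rw [dif_neg (by simp)]
    -- existence
    have hfst : ∀ j : Fin (n + 1), (∑ g, c g • pieriGen n g).1 j = p.1 j := by
      intro j
      induction j using Fin.reverseInduction with
      | last => rw [QBPBaux.S_last, hcl]
      | cast j ih =>
        rw [QBPBaux.S_step, QBPBaux.S_eqrec, ih, hca, hcb]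
        have h1 := (hp j).1
        have h2 := (hp j).2
        omega
    have hsnd : ∀ j : Fin n, (∑ g, c g • pieriGen n g).2 j = p.2 j := by
      intro j
      rw [QBPBaux.S_eqrec, hfst, hca]
      have h2 := (hp j).2
      omega
    refine ⟨c, ?_, ?_⟩
    · exact Prod.ext (funext fun j => (hfst j).symm) (funext fun j => (hsnd j).symm)
    · intro c' hc'
      funext g
      have hF : ∀ j : Fin (n + 1), (∑ g, c' g • pieriGen n g).1 j = p.1 j := by
        intro j; rw [← hc']
      have hS : ∀ j : Fin n, (∑ g, c' g • pieriGen n g).2 j = p.2 j := by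
        intro j; rw [← hc']
      rcases g with j | e
      · have := QBPBaux.S_eqrec n c' j
        rw [hS, hF] at this
        rw [hca]
        omega
      · induction e using Fin.lastCases with
        | last =>
          have := QBPBaux.S_last n c'
          rw [hF] at this
          rw [hcl, ← this]
        | cast j =>
          have := QBPBaux.S_step n c' j
          rw [hF, hS] at this
          rw [hcb]
          have h1 := (hp j).1
          omega
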